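/- If the flux-matching condition holds, then Q₂ * (conj(λ) - λ) = 0; that is, if Q₂ ≠ 0 then λ is real (obtained by choosing c_s = 1 and all other parameters zero). -/

import Mathlib

open Complex ComplexConjugate

/-- The flux-matching condition: for all real values of the eight parameters
`c_e, c_d, c_s, c_p, ch₁, ch₂, ca₁, ca₂`, the boundary/infinity flux identity
`4 M₁ c_d + 2 Q₁ (ch₁ + ca₁ + ch₂ + ca₂) = 4 M₂ ĉ_d + 2 Q₂ (ĉh₁ + ĉa₁ + ĉh₂ + ĉa₂)`
holds, where the hatted constants are the gauge-transformed ones (by `λ` and `ω`). -/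
def FluxMatching (M₁ M₂ Q₁ Q₂ ω : ℝ) (lam : ℂ) : Prop :=
  ∀ c_e c_d c_s c_p ch₁ ch₂ ca₁ ca₂ : ℝ,
    let cp : ℂ := (c_p : ℂ)
    let ca₁' : ℂ := ca₁ + 2 * I * c_p * lam
    let ca₂' : ℂ := ca₂ - 2 * I * c_p * conj lam
    let cd' : ℂ := c_d + ca₁ * conj lam + ca₂ * lam + 2 * c_p * ω
    let cs' : ℂ := c_s + 3 * I * (ca₁ * conj lam - ca₂ * lam) - 6 * c_p * lam * conj lam
    let ch₁' : ℂ := ch₁ + (c_d + I * c_s) * lam - ca₁ * (lam * conj lam + I * ω)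
      + 2 * lam ^ 2 * (ca₂ - I * c_p * conj lam) + 2 * c_p * lam * ω
    let ch₂' : ℂ := ch₂ + (c_d - I * c_s) * conj lam - ca₂ * (lam * conj lam - I * ω)
      + 2 * (conj lam) ^ 2 * (ca₁ + I * c_p * lam) + 2 * c_p * conj lam * ω
    (4 * (M₁ : ℂ) * c_d + 2 * (Q₁ : ℂ) * (ch₁ + ca₁ + ch₂ + ca₂) : ℂ)
      = 4 * (M₂ : ℂ) * cd' + 2 * (Q₂ : ℂ) * (ch₁' + ca₁' + ch₂' + ca₂')

/-- If the flux-matching condition holds, then `Q₂ (conj λ - λ) = 0`; that is,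
if `Q₂ ≠ 0` then `λ` is real (obtained by choosing `c_s = 1`, the rest zero). -/
theorem fluxMatching_lambda_real (M₁ M₂ Q₁ Q₂ ω : ℝ) (lam : ℂ)
    (h : FluxMatching M₁ M₂ Q₁ Q₂ ω lam) :
    (Q₂ : ℂ) * (conj lam - lam) = 0 := by
  have h1 := h 0 0 1 0 0 0 0 0
  simp only [Complex.ofReal_zero, Complex.ofReal_one] at h1
  replace h1 : (Q₂ : ℂ) * 2 = 0 ∨ lam * I - conj lam * I = 0 := by
    apply mul_eq_zero.mp
    linear_combination -h1
  rcases h1 with h1 | h1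
  · have : (Q₂ : ℂ) = 0 := by linear_combination h1 / 2
    rw [this, zero_mul]
  · have : conj lam - lam = 0 := by
      linear_combination I * h1 + (conj lam - lam) * Complex.I_sq
    rw [this, mul_zero]
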